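/- Define f_3(r) = ∫_{[−1/2,1/2]^3} 𝟙_{|ξ_1−ξ_2|≤r} 𝟙_{|ξ_2−ξ_3|≤r} 𝟙_{|ξ_3−ξ_1|≤r} dξ_1 dξ_2 dξ_3. Then f_3(r) = 3r^2 − 2r^3 for 0 < r < 1 and f_3(r) = 1 for r ≥ 1. -/

import Mathlib

open MeasureTheory Real


namespace S11
noncomputable section

def C : Set ℝ := Set.Icc (-(1:ℝ)/2) (1/2)

lemma measC : MeasurableSet C := measurableSet_Icc

lemma volC : volume C = 1 := by
  simp [C, Real.volume_Icc]; norm_num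

abbrev ρ : Measure ℝ := volume.restrict C

instance : IsFiniteMeasure ρ := by
  constructor
  rw [Measure.restrict_apply_univ, volC]
  exact ENNReal.one_lt_top

lemma integrable_of_le_one {α : Type*} [MeasurableSpace α] {μ : Measure α} [IsFiniteMeasure μ]
    {f : α → ℝ} (hm : Measurable f) (hb : ∀ x, |f x| ≤ 1) : Integrable f μ :=
  (integrable_const 1).mono' hm.aestronglyMeasurable
    (Filter.Eventually.of_forall (by simpa [Real.norm_eq_abs] using hb))

/-- innermost integral of an interval indicator -/
lemma int_ind (a b : ℝ) :
    (∫ z in C, if a ≤ z ∧ z ≤ b then (1:ℝ) else 0)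
      = max (min b (1/2) - max a (-(1/2))) 0 := by
  have h1 : (fun z => if a ≤ z ∧ z ≤ b then (1:ℝ) else 0)
      = (Set.Icc a b).indicator (fun _ => (1:ℝ)) := by
    funext z; simp [Set.indicator, Set.mem_Icc]
  rw [h1, setIntegral_indicator measurableSet_Icc]
  have h2 : C ∩ Set.Icc a b = Set.Icc (max (-(1/2)) a) (min (1/2) b) := by
    rw [C, Set.Icc_inter_Icc]; norm_num
  rw [h2, setIntegral_const, smul_eq_mul, mul_one, measureReal_def, Real.volume_Icc]
  rw [ENNReal.toReal_ofReal']
  rw [min_comm, max_comm (-(1/2)) a, max_comm]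


lemma int_Icc_upper {A B : ℝ} (h : B ≤ A) :
    (∫ y in Set.Icc B A, (A - y)) = (A - B)^2/2 := by
  rw [MeasureTheory.integral_Icc_eq_integral_Ioc, ← intervalIntegral.integral_of_le h]
  have h1 : IntervalIntegrable (fun _ => A) volume B A := intervalIntegrable_const
  have h2 : IntervalIntegrable (fun y : ℝ => y) volume B A := intervalIntegral.intervalIntegrable_id
  rw [intervalIntegral.integral_sub h1 h2, intervalIntegral.integral_const, integral_id, smul_eq_mul]
  ring

lemma int_Icc_lower {A B : ℝ} (h : B ≤ A) :
    (∫ y in Set.Icc B A, (y - B)) = (A - B)^2/2 := by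
  rw [MeasureTheory.integral_Icc_eq_integral_Ioc, ← intervalIntegral.integral_of_le h]
  have h1 : IntervalIntegrable (fun _ => B) volume B A := intervalIntegrable_const
  have h2 : IntervalIntegrable (fun y : ℝ => y) volume B A := intervalIntegral.intervalIntegrable_id
  rw [intervalIntegral.integral_sub h2 h1, intervalIntegral.integral_const, integral_id, smul_eq_mul]
  ring

/-- middle lemma, shape 1 (decreasing ramp) -/
lemma midL1 (b c : ℝ) (h : max b (-(1/2)) ≤ min c (1/2)) :
    (∫ y in C, (if b ≤ y then (1:ℝ) else 0) * max (min c (1/2) - max y (-(1/2))) 0)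
      = (min c (1/2) - max b (-(1/2)))^2/2 := by
  set B := max b (-(1/2)) with hB
  set A := min c (1/2) with hA
  have hBl : -(1/2:ℝ) ≤ B := le_max_right _ _
  have hAu : A ≤ 1/2 := min_le_right _ _
  have key : Set.EqOn (fun y => (if b ≤ y then (1:ℝ) else 0) * max (A - max y (-(1/2))) 0)
      ((Set.Icc B A).indicator (fun y => A - y)) C := by
    intro y hy
    rcases hy with ⟨hy1, hy2⟩
    have hmy : max y (-(1/2)) = y := max_eq_left (by linarith [hy1])
    simp only [Set.indicator, Set.mem_Icc, hmy]
    by_cases h1 : b ≤ y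
    · rw [if_pos h1, one_mul]
      have hBy : B ≤ y := max_le h1 (by linarith)
      by_cases h2 : y ≤ A
      · rw [if_pos ⟨hBy, h2⟩, max_eq_left (by linarith)]
      · rw [if_neg (by tauto), max_eq_right (by push_neg at h2; linarith)]
    · rw [if_neg h1, zero_mul, if_neg]
      rintro ⟨hBy, -⟩
      exact h1 (le_trans (le_max_left _ _) hBy)
  have hsub : Set.Icc B A ⊆ C := by
    rw [C]; exact Set.Icc_subset_Icc (by linarith) (by linarith)
  rw [setIntegral_congr_fun measC key, setIntegral_indicator measurableSet_Icc,
    Set.inter_eq_self_of_subset_right hsub, int_Icc_upper h]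

/-- middle lemma, shape 2 (increasing ramp) -/
lemma midL2 (b c : ℝ) (h : max b (-(1/2)) ≤ min c (1/2)) :
    (∫ y in C, (if y ≤ c then (1:ℝ) else 0) * max (min y (1/2) - max b (-(1/2))) 0)
      = (min c (1/2) - max b (-(1/2)))^2/2 := by
  set B := max b (-(1/2)) with hB
  set A := min c (1/2) with hA
  have hBl : -(1/2:ℝ) ≤ B := le_max_right _ _
  have hAu : A ≤ 1/2 := min_le_right _ _
  have key : Set.EqOn (fun y => (if y ≤ c then (1:ℝ) else 0) * max (min y (1/2) - B) 0)
      ((Set.Icc B A).indicator (fun y => y - B)) C := by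
    intro y hy
    rcases hy with ⟨hy1, hy2⟩
    have hmy : min y (1/2) = y := min_eq_left (by linarith)
    simp only [Set.indicator, Set.mem_Icc, hmy]
    by_cases h1 : y ≤ c
    · rw [if_pos h1, one_mul]
      have hyA : y ≤ A := le_min h1 (by linarith)
      by_cases h2 : B ≤ y
      · rw [if_pos ⟨h2, hyA⟩, max_eq_left (by linarith)]
      · rw [if_neg (by tauto), max_eq_right (by push_neg at h2; linarith)]
    · rw [if_neg h1, zero_mul, if_neg]
      rintro ⟨-, hyA⟩
      exact h1 (le_trans hyA (min_le_left _ _))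
  have hsub : Set.Icc B A ⊆ C := by
    rw [C]; exact Set.Icc_subset_Icc (by linarith) (by linarith)
  rw [setIntegral_congr_fun measC key, setIntegral_indicator measurableSet_Icc,
    Set.inter_eq_self_of_subset_right hsub, int_Icc_lower h]


lemma cont_sq_min (r : ℝ) : Continuous fun x : ℝ => (min (x+r) (1/2) - max x (-(1/2)))^2/2 := by
  fun_prop

lemma cont_sq_max (r : ℝ) : Continuous fun x : ℝ => (min x (1/2) - max (x-r) (-(1/2)))^2/2 := by
  fun_prop

lemma poly_eval (a b : ℝ) :
    (∫ x in a..b, (1/8 - x/2 + x^2/2 : ℝ)) = (b - a)/8 - (b^2 - a^2)/4 + (b^3 - a^3)/6 := by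
  have i1 : IntervalIntegrable (fun _ : ℝ => (1/8 : ℝ)) volume a b := intervalIntegrable_const
  have i2 : IntervalIntegrable (fun x : ℝ => x/2) volume a b :=
    (Continuous.intervalIntegrable (by fun_prop) _ _)
  have i3 : IntervalIntegrable (fun x : ℝ => x^2/2) volume a b :=
    (Continuous.intervalIntegrable (by fun_prop) _ _)
  rw [intervalIntegral.integral_add (i1.sub i2) i3, intervalIntegral.integral_sub i1 i2,
    intervalIntegral.integral_div, intervalIntegral.integral_div, intervalIntegral.integral_div,
    intervalIntegral.integral_const, integral_id, integral_pow, smul_eq_mul]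
  norm_num
  ring

lemma outerO1 {r : ℝ} (hr : 0 < r) (hr1 : r < 1) :
    (∫ x in C, (min (x+r) (1/2) - max x (-(1/2)))^2/2) = r^2*(1-r)/2 + r^3/6 := by
  have hab : (-(1/2) : ℝ) ≤ 1/2 - r := by linarith
  have hbc : (1/2 - r : ℝ) ≤ 1/2 := by linarith
  rw [show C = Set.Icc (-(1/2) : ℝ) (1/2) by rw [C]; norm_num,
    MeasureTheory.integral_Icc_eq_integral_Ioc,
    ← intervalIntegral.integral_of_le (by linarith : (-(1/2):ℝ) ≤ 1/2),
    ← intervalIntegral.integral_add_adjacent_intervals (b := 1/2 - r)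
      ((cont_sq_min r).intervalIntegrable _ _) ((cont_sq_min r).intervalIntegrable _ _)]
  have e1 : (∫ x in (-(1/2) : ℝ)..(1/2 - r), (min (x+r) (1/2) - max x (-(1/2)))^2/2)
      = ∫ _x in (-(1/2) : ℝ)..(1/2 - r), (r^2/2 : ℝ) := by
    apply intervalIntegral.integral_congr
    intro x hx
    rw [Set.uIcc_of_le hab, Set.mem_Icc] at hx
    have h1 : min (x+r) (1/2) = x + r := min_eq_left (by linarith [hx.1, hx.2])
    have h2 : max x (-(1/2)) = x := max_eq_left (by linarith [hx.1])
    simp only [h1, h2]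
    ring
  have e2 : (∫ x in (1/2 - r : ℝ)..(1/2), (min (x+r) (1/2) - max x (-(1/2)))^2/2)
      = ∫ x in (1/2 - r : ℝ)..(1/2), (1/8 - x/2 + x^2/2 : ℝ) := by
    apply intervalIntegral.integral_congr
    intro x hx
    rw [Set.uIcc_of_le hbc, Set.mem_Icc] at hx
    have h1 : min (x+r) (1/2) = 1/2 := min_eq_right (by linarith [hx.1])
    have h2 : max x (-(1/2)) = x := max_eq_left (by linarith [hx.1])
    simp only [h1, h2]
    ring
  rw [e1, e2, poly_eval, intervalIntegral.integral_const, smul_eq_mul]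
  ring

lemma outerO2 {r : ℝ} (hr : 0 < r) (hr1 : r < 1) :
    (∫ x in C, (min x (1/2) - max (x-r) (-(1/2)))^2/2) = r^2*(1-r)/2 + r^3/6 := by
  have hab : (-(1/2) : ℝ) ≤ r - 1/2 := by linarith
  have hbc : (r - 1/2 : ℝ) ≤ 1/2 := by linarith
  rw [show C = Set.Icc (-(1/2) : ℝ) (1/2) by rw [C]; norm_num,
    MeasureTheory.integral_Icc_eq_integral_Ioc,
    ← intervalIntegral.integral_of_le (by linarith : (-(1/2):ℝ) ≤ 1/2),
    ← intervalIntegral.integral_add_adjacent_intervals (b := r - 1/2)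
      ((cont_sq_max r).intervalIntegrable _ _) ((cont_sq_max r).intervalIntegrable _ _)]
  have e1 : (∫ x in (-(1/2) : ℝ)..(r - 1/2), (min x (1/2) - max (x-r) (-(1/2)))^2/2)
      = ∫ x in (-(1/2) : ℝ)..(r - 1/2), (1/8 + x/2 + x^2/2 : ℝ) := by
    apply intervalIntegral.integral_congr
    intro x hx
    rw [Set.uIcc_of_le hab, Set.mem_Icc] at hx
    have h1 : min x (1/2) = x := min_eq_left (by linarith [hx.2])
    have h2 : max (x-r) (-(1/2)) = -(1/2) := max_eq_right (by linarith [hx.2])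
    simp only [h1, h2]
    ring
  have e2 : (∫ x in (r - 1/2 : ℝ)..(1/2), (min x (1/2) - max (x-r) (-(1/2)))^2/2)
      = ∫ _x in (r - 1/2 : ℝ)..(1/2), (r^2/2 : ℝ) := by
    apply intervalIntegral.integral_congr
    intro x hx
    rw [Set.uIcc_of_le hbc, Set.mem_Icc] at hx
    have h1 : min x (1/2) = x := min_eq_left (by linarith [hx.2])
    have h2 : max (x-r) (-(1/2)) = x - r := max_eq_left (by linarith [hx.1])
    simp only [h1, h2]
    ring
  have poly' : (∫ x in (-(1/2) : ℝ)..(r - 1/2), (1/8 + x/2 + x^2/2 : ℝ))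
      = ((r-1/2) - (-(1/2)))/8 + ((r-1/2)^2 - (-(1/2))^2)/4 + ((r-1/2)^3 - (-(1/2))^3)/6 := by
    have i1 : IntervalIntegrable (fun _ : ℝ => (1/8 : ℝ)) volume (-(1/2)) (r-1/2) :=
      intervalIntegrable_const
    have i2 : IntervalIntegrable (fun x : ℝ => x/2) volume (-(1/2)) (r-1/2) :=
      (Continuous.intervalIntegrable (by fun_prop) _ _)
    have i3 : IntervalIntegrable (fun x : ℝ => x^2/2) volume (-(1/2)) (r-1/2) :=
      (Continuous.intervalIntegrable (by fun_prop) _ _)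
    rw [intervalIntegral.integral_add (i1.add i2) i3, intervalIntegral.integral_add i1 i2,
      intervalIntegral.integral_div, intervalIntegral.integral_div, intervalIntegral.integral_div,
      intervalIntegral.integral_const, integral_id, integral_pow, smul_eq_mul]
    norm_num
    ring
  rw [e1, e2, poly', intervalIntegral.integral_const, smul_eq_mul]
  ring


lemma mul_ind (P Q : Prop) [Decidable P] [Decidable Q] :
    (if P then (1:ℝ) else 0) * (if Q then 1 else 0) = if P ∧ Q then 1 else 0 := by
  split_ifs <;> simp_all

lemma sum_t {r x y z : ℝ} (hxy : x ≠ y) (hyz : y ≠ z) (hxz : x ≠ z) :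
    (if |x - y| ≤ r then (1:ℝ) else 0) * (if |y - z| ≤ r then 1 else 0)
        * (if |z - x| ≤ r then 1 else 0)
      = (if x ≤ y then (1:ℝ) else 0) * (if y ≤ z ∧ z ≤ x + r then 1 else 0)
      + (if y ≤ x + r then (1:ℝ) else 0) * (if x ≤ z ∧ z ≤ y then 1 else 0)
      + (if y ≤ x then (1:ℝ) else 0) * (if x ≤ z ∧ z ≤ y + r then 1 else 0)
      + (if x - r ≤ y then (1:ℝ) else 0) * (if y ≤ z ∧ z ≤ x then 1 else 0)
      + (if x ≤ y then (1:ℝ) else 0) * (if y - r ≤ z ∧ z ≤ x then 1 else 0)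
      + (if y ≤ x then (1:ℝ) else 0) * (if x - r ≤ z ∧ z ≤ y then 1 else 0) := by
  simp only [mul_ind, abs_sub_le_iff]
  rcases hxy.lt_or_gt with h1 | h1 <;> rcases hyz.lt_or_gt with h2 | h2 <;>
    rcases hxz.lt_or_gt with h3 | h3
  · rw [if_neg (show ¬(y ≤ x + r ∧ x ≤ z ∧ z ≤ y) by rintro ⟨-, -, h⟩; linarith),
      if_neg (show ¬(y ≤ x ∧ x ≤ z ∧ z ≤ y + r) by rintro ⟨h, -⟩; linarith),
      if_neg (show ¬(x - r ≤ y ∧ y ≤ z ∧ z ≤ x) by rintro ⟨-, -, h⟩; linarith),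
      if_neg (show ¬(x ≤ y ∧ y - r ≤ z ∧ z ≤ x) by rintro ⟨-, -, h⟩; linarith),
      if_neg (show ¬(y ≤ x ∧ x - r ≤ z ∧ z ≤ y) by rintro ⟨h, -⟩; linarith)]
    simp only [add_zero, zero_add]
    apply if_congr _ rfl rfl
    constructor
    · rintro ⟨⟨⟨ha1, ha2⟩, hb1, hb2⟩, hc1, hc2⟩
      exact ⟨by linarith, by linarith, by linarith⟩
    · rintro ⟨hd1, hd2, hd3⟩
      exact ⟨⟨⟨by linarith, by linarith⟩, by linarith, by linarith⟩, by linarith, by linarith⟩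
  · linarith
  · rw [if_neg (show ¬(x ≤ y ∧ y ≤ z ∧ z ≤ x + r) by rintro ⟨-, h, -⟩; linarith),
      if_neg (show ¬(y ≤ x ∧ x ≤ z ∧ z ≤ y + r) by rintro ⟨h, -⟩; linarith),
      if_neg (show ¬(x - r ≤ y ∧ y ≤ z ∧ z ≤ x) by rintro ⟨-, h, -⟩; linarith),
      if_neg (show ¬(x ≤ y ∧ y - r ≤ z ∧ z ≤ x) by rintro ⟨-, -, h⟩; linarith),
      if_neg (show ¬(y ≤ x ∧ x - r ≤ z ∧ z ≤ y) by rintro ⟨h, -⟩; linarith)]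
    simp only [add_zero, zero_add]
    apply if_congr _ rfl rfl
    constructor
    · rintro ⟨⟨⟨ha1, ha2⟩, hb1, hb2⟩, hc1, hc2⟩
      exact ⟨by linarith, by linarith, by linarith⟩
    · rintro ⟨hd1, hd2, hd3⟩
      exact ⟨⟨⟨by linarith, by linarith⟩, by linarith, by linarith⟩, by linarith, by linarith⟩
  · rw [if_neg (show ¬(x ≤ y ∧ y ≤ z ∧ z ≤ x + r) by rintro ⟨-, h, -⟩; linarith),
      if_neg (show ¬(y ≤ x + r ∧ x ≤ z ∧ z ≤ y) by rintro ⟨-, h, -⟩; linarith),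
      if_neg (show ¬(y ≤ x ∧ x ≤ z ∧ z ≤ y + r) by rintro ⟨h, -⟩; linarith),
      if_neg (show ¬(x - r ≤ y ∧ y ≤ z ∧ z ≤ x) by rintro ⟨-, h, -⟩; linarith),
      if_neg (show ¬(y ≤ x ∧ x - r ≤ z ∧ z ≤ y) by rintro ⟨h, -⟩; linarith)]
    simp only [add_zero, zero_add]
    apply if_congr _ rfl rfl
    constructor
    · rintro ⟨⟨⟨ha1, ha2⟩, hb1, hb2⟩, hc1, hc2⟩
      exact ⟨by linarith, by linarith, by linarith⟩
    · rintro ⟨hd1, hd2, hd3⟩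
      exact ⟨⟨⟨by linarith, by linarith⟩, by linarith, by linarith⟩, by linarith, by linarith⟩
  · rw [if_neg (show ¬(x ≤ y ∧ y ≤ z ∧ z ≤ x + r) by rintro ⟨h, -⟩; linarith),
      if_neg (show ¬(y ≤ x + r ∧ x ≤ z ∧ z ≤ y) by rintro ⟨-, -, h⟩; linarith),
      if_neg (show ¬(x - r ≤ y ∧ y ≤ z ∧ z ≤ x) by rintro ⟨-, -, h⟩; linarith),
      if_neg (show ¬(x ≤ y ∧ y - r ≤ z ∧ z ≤ x) by rintro ⟨h, -⟩; linarith),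
      if_neg (show ¬(y ≤ x ∧ x - r ≤ z ∧ z ≤ y) by rintro ⟨-, -, h⟩; linarith)]
    simp only [add_zero, zero_add]
    apply if_congr _ rfl rfl
    constructor
    · rintro ⟨⟨⟨ha1, ha2⟩, hb1, hb2⟩, hc1, hc2⟩
      exact ⟨by linarith, by linarith, by linarith⟩
    · rintro ⟨hd1, hd2, hd3⟩
      exact ⟨⟨⟨by linarith, by linarith⟩, by linarith, by linarith⟩, by linarith, by linarith⟩
  · rw [if_neg (show ¬(x ≤ y ∧ y ≤ z ∧ z ≤ x + r) by rintro ⟨h, -⟩; linarith),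
      if_neg (show ¬(y ≤ x + r ∧ x ≤ z ∧ z ≤ y) by rintro ⟨-, h, -⟩; linarith),
      if_neg (show ¬(y ≤ x ∧ x ≤ z ∧ z ≤ y + r) by rintro ⟨-, h, -⟩; linarith),
      if_neg (show ¬(x ≤ y ∧ y - r ≤ z ∧ z ≤ x) by rintro ⟨h, -⟩; linarith),
      if_neg (show ¬(y ≤ x ∧ x - r ≤ z ∧ z ≤ y) by rintro ⟨-, -, h⟩; linarith)]
    simp only [add_zero, zero_add]
    apply if_congr _ rfl rfl
    constructor
    · rintro ⟨⟨⟨ha1, ha2⟩, hb1, hb2⟩, hc1, hc2⟩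
      exact ⟨by linarith, by linarith, by linarith⟩
    · rintro ⟨hd1, hd2, hd3⟩
      exact ⟨⟨⟨by linarith, by linarith⟩, by linarith, by linarith⟩, by linarith, by linarith⟩
  · linarith
  · rw [if_neg (show ¬(x ≤ y ∧ y ≤ z ∧ z ≤ x + r) by rintro ⟨h, -⟩; linarith),
      if_neg (show ¬(y ≤ x + r ∧ x ≤ z ∧ z ≤ y) by rintro ⟨-, h, -⟩; linarith),
      if_neg (show ¬(y ≤ x ∧ x ≤ z ∧ z ≤ y + r) by rintro ⟨-, h, -⟩; linarith),
      if_neg (show ¬(x - r ≤ y ∧ y ≤ z ∧ z ≤ x) by rintro ⟨-, h, -⟩; linarith),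
      if_neg (show ¬(x ≤ y ∧ y - r ≤ z ∧ z ≤ x) by rintro ⟨h, -⟩; linarith)]
    simp only [add_zero, zero_add]
    apply if_congr _ rfl rfl
    constructor
    · rintro ⟨⟨⟨ha1, ha2⟩, hb1, hb2⟩, hc1, hc2⟩
      exact ⟨by linarith, by linarith, by linarith⟩
    · rintro ⟨hd1, hd2, hd3⟩
      exact ⟨⟨⟨by linarith, by linarith⟩, by linarith, by linarith⟩, by linarith, by linarith⟩


lemma ind_mul_le_one {P : Prop} [Decidable P] {v : ℝ} (h0 : 0 ≤ v) (h1 : v ≤ 1) :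
    |(if P then (1:ℝ) else 0) * v| ≤ 1 := by
  split_ifs
  · rw [one_mul, abs_of_nonneg h0]; exact h1
  · simp

lemma max_term_nonneg (a b : ℝ) : 0 ≤ max (a - b) 0 := le_max_right _ _

lemma max_term_le_one (c y : ℝ) : max (min c (1/2) - max y (-(1/2))) 0 ≤ 1 := by
  apply max_le _ zero_le_one
  have h1 := min_le_right c (1/2:ℝ)
  have h2 := le_max_right y (-(1/2):ℝ)
  linarith

lemma intInd (a b : ℝ) : Integrable (fun z => if a ≤ z ∧ z ≤ b then (1:ℝ) else 0) ρ := by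
  have h1 : (fun z => if a ≤ z ∧ z ≤ b then (1:ℝ) else 0)
      = (Set.Icc a b).indicator (fun _ => (1:ℝ)) := by
    funext z; simp [Set.indicator, Set.mem_Icc]
  apply integrable_of_le_one
  · rw [h1]; exact measurable_const.indicator measurableSet_Icc
  · intro z; split_ifs <;> norm_num

lemma int_const_mul_ind (c a b : ℝ) :
    (∫ z in C, c * (if a ≤ z ∧ z ≤ b then (1:ℝ) else 0))
      = c * max (min b (1/2) - max a (-(1/2))) 0 := by
  rw [MeasureTheory.integral_const_mul, int_ind]

lemma measG1 (b c : ℝ) : Measurable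
    (fun y : ℝ => (if b ≤ y then (1:ℝ) else 0) * max (min c (1/2) - max y (-(1/2))) 0) := by
  apply Measurable.mul
  · exact Measurable.ite (measurableSet_le measurable_const measurable_id)
      measurable_const measurable_const
  · exact Continuous.measurable (by fun_prop)

lemma measG2 (b c : ℝ) : Measurable
    (fun y : ℝ => (if y ≤ c then (1:ℝ) else 0) * max (min y (1/2) - max b (-(1/2))) 0) := by
  apply Measurable.mul
  · exact Measurable.ite (measurableSet_le measurable_id measurable_const)
      measurable_const measurable_const
  · exact Continuous.measurable (by fun_prop)

lemma intG1 (b c : ℝ) : Integrable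
    (fun y : ℝ => (if b ≤ y then (1:ℝ) else 0) * max (min c (1/2) - max y (-(1/2))) 0) ρ :=
  integrable_of_le_one (measG1 b c)
    (fun y => ind_mul_le_one (max_term_nonneg _ _) (max_term_le_one c y))

lemma intG2 (b c : ℝ) : Integrable
    (fun y : ℝ => (if y ≤ c then (1:ℝ) else 0) * max (min y (1/2) - max b (-(1/2))) 0) ρ :=
  integrable_of_le_one (measG2 b c)
    (fun y => ind_mul_le_one (max_term_nonneg _ _) (max_term_le_one y b))

def F3 (r : ℝ) : ℝ × ℝ → ℝ := fun p =>
  (if p.2 ≤ p.1 then (1:ℝ) else 0) * max (min (p.2 + r) (1/2) - max p.1 (-(1/2))) 0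

def F5 (r : ℝ) : ℝ × ℝ → ℝ := fun p =>
  (if p.1 ≤ p.2 then (1:ℝ) else 0) * max (min p.1 (1/2) - max (p.2 - r) (-(1/2))) 0

lemma intF3 (r : ℝ) : Integrable (F3 r) (ρ.prod ρ) := by
  apply integrable_of_le_one
  · apply Measurable.mul
    · exact Measurable.ite (measurableSet_le measurable_snd measurable_fst)
        measurable_const measurable_const
    · exact Continuous.measurable (by fun_prop)
  · exact fun p => ind_mul_le_one (max_term_nonneg _ _) (max_term_le_one _ _)

lemma intF5 (r : ℝ) : Integrable (F5 r) (ρ.prod ρ) := by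
  apply integrable_of_le_one
  · apply Measurable.mul
    · exact Measurable.ite (measurableSet_le measurable_fst measurable_snd)
        measurable_const measurable_const
    · exact Continuous.measurable (by fun_prop)
  · intro p
    apply ind_mul_le_one (max_term_nonneg _ _)
    apply max_le _ zero_le_one
    have h1 := min_le_right p.1 (1/2:ℝ)
    have h2 := le_max_right (p.2 - r) (-(1/2):ℝ)
    linarith

/-- innermost step: integrate out `z` -/
lemma inner_sum (r x y : ℝ) (hxy : x ≠ y) :
    (∫ z in C, (if |x - y| ≤ r then (1:ℝ) else 0) * (if |y - z| ≤ r then 1 else 0)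
        * (if |z - x| ≤ r then 1 else 0))
      = (if x ≤ y then (1:ℝ) else 0) * max (min (x + r) (1/2) - max y (-(1/2))) 0
      + (if y ≤ x + r then (1:ℝ) else 0) * max (min y (1/2) - max x (-(1/2))) 0
      + F3 r (x, y)
      + (if x - r ≤ y then (1:ℝ) else 0) * max (min x (1/2) - max y (-(1/2))) 0
      + F5 r (x, y)
      + (if y ≤ x then (1:ℝ) else 0) * max (min y (1/2) - max (x - r) (-(1/2))) 0 := by
  have h0 : volume ({x, y} : Set ℝ) = 0 :=
    Set.Countable.measure_zero ((Set.countable_singleton y).insert x) _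
  have hae : (fun z => (if |x - y| ≤ r then (1:ℝ) else 0) * (if |y - z| ≤ r then 1 else 0)
        * (if |z - x| ≤ r then 1 else 0))
      =ᵐ[ρ] (fun z =>
        (if x ≤ y then (1:ℝ) else 0) * (if y ≤ z ∧ z ≤ x + r then 1 else 0)
      + (if y ≤ x + r then (1:ℝ) else 0) * (if x ≤ z ∧ z ≤ y then 1 else 0)
      + (if y ≤ x then (1:ℝ) else 0) * (if x ≤ z ∧ z ≤ y + r then 1 else 0)
      + (if x - r ≤ y then (1:ℝ) else 0) * (if y ≤ z ∧ z ≤ x then 1 else 0)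
      + (if x ≤ y then (1:ℝ) else 0) * (if y - r ≤ z ∧ z ≤ x then 1 else 0)
      + (if y ≤ x then (1:ℝ) else 0) * (if x - r ≤ z ∧ z ≤ y then 1 else 0)) := by
    apply ae_restrict_of_ae
    filter_upwards [measure_eq_zero_iff_ae_notMem.mp h0] with z hz
    have hz1 : z ≠ x := fun h => hz (by simp [h])
    have hz2 : z ≠ y := fun h => hz (by simp [h])
    exact sum_t hxy (Ne.symm hz2) (Ne.symm hz1)
  rw [integral_congr_ae hae]
  have i1 := (intInd y (x + r)).const_mul (if x ≤ y then (1:ℝ) else 0)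
  have i2 := (intInd x y).const_mul (if y ≤ x + r then (1:ℝ) else 0)
  have i3 := (intInd x (y + r)).const_mul (if y ≤ x then (1:ℝ) else 0)
  have i4 := (intInd y x).const_mul (if x - r ≤ y then (1:ℝ) else 0)
  have i5 := (intInd (y - r) x).const_mul (if x ≤ y then (1:ℝ) else 0)
  have i6 := (intInd (x - r) y).const_mul (if y ≤ x then (1:ℝ) else 0)
  have s2 : Integrable (fun z => (if x ≤ y then (1:ℝ) else 0) * (if y ≤ z ∧ z ≤ x + r then 1 else 0)
      + (if y ≤ x + r then (1:ℝ) else 0) * (if x ≤ z ∧ z ≤ y then 1 else 0)) ρ := by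
    exact i1.add i2
  have s3 : Integrable (fun z => (if x ≤ y then (1:ℝ) else 0) * (if y ≤ z ∧ z ≤ x + r then 1 else 0)
      + (if y ≤ x + r then (1:ℝ) else 0) * (if x ≤ z ∧ z ≤ y then 1 else 0)
      + (if y ≤ x then (1:ℝ) else 0) * (if x ≤ z ∧ z ≤ y + r then 1 else 0)) ρ := by
    exact s2.add i3
  have s4 : Integrable (fun z => (if x ≤ y then (1:ℝ) else 0) * (if y ≤ z ∧ z ≤ x + r then 1 else 0)
      + (if y ≤ x + r then (1:ℝ) else 0) * (if x ≤ z ∧ z ≤ y then 1 else 0)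
      + (if y ≤ x then (1:ℝ) else 0) * (if x ≤ z ∧ z ≤ y + r then 1 else 0)
      + (if x - r ≤ y then (1:ℝ) else 0) * (if y ≤ z ∧ z ≤ x then 1 else 0)) ρ := by
    exact s3.add i4
  have s5 : Integrable (fun z => (if x ≤ y then (1:ℝ) else 0) * (if y ≤ z ∧ z ≤ x + r then 1 else 0)
      + (if y ≤ x + r then (1:ℝ) else 0) * (if x ≤ z ∧ z ≤ y then 1 else 0)
      + (if y ≤ x then (1:ℝ) else 0) * (if x ≤ z ∧ z ≤ y + r then 1 else 0)
      + (if x - r ≤ y then (1:ℝ) else 0) * (if y ≤ z ∧ z ≤ x then 1 else 0)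
      + (if x ≤ y then (1:ℝ) else 0) * (if y - r ≤ z ∧ z ≤ x then 1 else 0)) ρ := by
    exact s4.add i5
  rw [integral_add s5 i6, integral_add s4 i5, integral_add s3 i4, integral_add s2 i3,
    integral_add i1 i2]
  rw [int_const_mul_ind, int_const_mul_ind, int_const_mul_ind, int_const_mul_ind,
    int_const_mul_ind, int_const_mul_ind]
  rfl

/-- middle step: integrate out `y` -/
lemma mid_sum (r : ℝ) (hr : 0 < r) (x : ℝ) (hx : x ∈ C) :
    (∫ y in C, ∫ z in C, (if |x - y| ≤ r then (1:ℝ) else 0) * (if |y - z| ≤ r then 1 else 0)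
        * (if |z - x| ≤ r then 1 else 0))
      = (min (x + r) (1/2) - max x (-(1/2)))^2/2
      + (min (x + r) (1/2) - max x (-(1/2)))^2/2
      + (∫ y, F3 r (x, y) ∂ρ)
      + (min x (1/2) - max (x - r) (-(1/2)))^2/2
      + (∫ y, F5 r (x, y) ∂ρ)
      + (min x (1/2) - max (x - r) (-(1/2)))^2/2 := by
  simp only [C, Set.mem_Icc] at hx
  obtain ⟨hx1, hx2⟩ := hx
  have hyp1 : max x (-(1/2)) ≤ min (x + r) (1/2) :=
    max_le (le_min (by linarith) (by linarith)) (le_min (by linarith) (by norm_num))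
  have hyp2 : max (x - r) (-(1/2)) ≤ min x (1/2) :=
    max_le (le_min (by linarith) (by linarith)) (le_min (by linarith) (by norm_num))
  have hae : (fun y => ∫ z in C, (if |x - y| ≤ r then (1:ℝ) else 0)
        * (if |y - z| ≤ r then 1 else 0) * (if |z - x| ≤ r then 1 else 0))
      =ᵐ[ρ] (fun y =>
        (if x ≤ y then (1:ℝ) else 0) * max (min (x + r) (1/2) - max y (-(1/2))) 0
      + (if y ≤ x + r then (1:ℝ) else 0) * max (min y (1/2) - max x (-(1/2))) 0
      + F3 r (x, y)
      + (if x - r ≤ y then (1:ℝ) else 0) * max (min x (1/2) - max y (-(1/2))) 0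
      + F5 r (x, y)
      + (if y ≤ x then (1:ℝ) else 0) * max (min y (1/2) - max (x - r) (-(1/2))) 0) := by
    apply ae_restrict_of_ae
    filter_upwards [measure_eq_zero_iff_ae_notMem.mp (measure_singleton x)] with y hy
    exact inner_sum r x y (fun h => hy (by simp [h]))
  rw [integral_congr_ae hae]
  have i1 := intG1 x (x + r)
  have i2 := intG2 x (x + r)
  have i3 : Integrable (fun y => F3 r (x, y)) ρ := by
    apply integrable_of_le_one
    · apply Measurable.mul
      · exact Measurable.ite (measurableSet_le measurable_id measurable_const)
          measurable_const measurable_const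
      · exact Continuous.measurable (by fun_prop)
    · exact fun y => ind_mul_le_one (max_term_nonneg _ _) (max_term_le_one _ _)
  have i4 := intG1 (x - r) x
  have i5 : Integrable (fun y => F5 r (x, y)) ρ := by
    apply integrable_of_le_one
    · apply Measurable.mul
      · exact Measurable.ite (measurableSet_le measurable_const measurable_id)
          measurable_const measurable_const
      · exact Continuous.measurable (by fun_prop)
    · intro y
      apply ind_mul_le_one (max_term_nonneg _ _)
      apply max_le _ zero_le_one
      have h1 := min_le_right x (1/2:ℝ)
      have h2 := le_max_right (y - r) (-(1/2):ℝ)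
      linarith
  have i6 := intG2 (x - r) x
  have s2 : Integrable (fun y =>
      (if x ≤ y then (1:ℝ) else 0) * max (min (x + r) (1/2) - max y (-(1/2))) 0
      + (if y ≤ x + r then (1:ℝ) else 0) * max (min y (1/2) - max x (-(1/2))) 0) ρ := by
    exact i1.add i2
  have s3 : Integrable (fun y =>
      (if x ≤ y then (1:ℝ) else 0) * max (min (x + r) (1/2) - max y (-(1/2))) 0
      + (if y ≤ x + r then (1:ℝ) else 0) * max (min y (1/2) - max x (-(1/2))) 0
      + F3 r (x, y)) ρ := by
    exact s2.add i3
  have s4 : Integrable (fun y =>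
      (if x ≤ y then (1:ℝ) else 0) * max (min (x + r) (1/2) - max y (-(1/2))) 0
      + (if y ≤ x + r then (1:ℝ) else 0) * max (min y (1/2) - max x (-(1/2))) 0
      + F3 r (x, y)
      + (if x - r ≤ y then (1:ℝ) else 0) * max (min x (1/2) - max y (-(1/2))) 0) ρ := by
    exact s3.add i4
  have s5 : Integrable (fun y =>
      (if x ≤ y then (1:ℝ) else 0) * max (min (x + r) (1/2) - max y (-(1/2))) 0
      + (if y ≤ x + r then (1:ℝ) else 0) * max (min y (1/2) - max x (-(1/2))) 0
      + F3 r (x, y)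
      + (if x - r ≤ y then (1:ℝ) else 0) * max (min x (1/2) - max y (-(1/2))) 0
      + F5 r (x, y)) ρ := by
    exact s4.add i5
  rw [integral_add s5 i6, integral_add s4 i5, integral_add s3 i4, integral_add s2 i3,
    integral_add i1 i2]
  rw [midL1 x (x + r) hyp1, midL2 x (x + r) hyp1, midL1 (x - r) x hyp2, midL2 (x - r) x hyp2]

/-- the triple iterated integral -/
lemma triple (r : ℝ) (hr : 0 < r) (hr1 : r < 1) :
    (∫ x in C, ∫ y in C, ∫ z in C,
        (if |x - y| ≤ r then (1:ℝ) else 0) * (if |y - z| ≤ r then 1 else 0)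
          * (if |z - x| ≤ r then 1 else 0))
      = 3 * r ^ 2 - 2 * r ^ 3 := by
  rw [setIntegral_congr_fun measC (fun x hx => mid_sum r hr x hx)]
  have j1 : Integrable (fun x => (min (x + r) (1/2) - max x (-(1/2)))^2/2) ρ := by
    have h := (cont_sq_min r).integrableOn_Icc (μ := volume) (a := -(1/2 : ℝ)) (b := (1/2 : ℝ))
    unfold ρ
    rw [show C = Set.Icc (-(1/2) : ℝ) (1/2) by rw [C]; norm_num]
    exact h
  have j2 : Integrable (fun x => (min x (1/2) - max (x - r) (-(1/2)))^2/2) ρ := by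
    have h := (cont_sq_max r).integrableOn_Icc (μ := volume) (a := -(1/2 : ℝ)) (b := (1/2 : ℝ))
    unfold ρ
    rw [show C = Set.Icc (-(1/2) : ℝ) (1/2) by rw [C]; norm_num]
    exact h
  have j3 : Integrable (fun x => ∫ y, F3 r (x, y) ∂ρ) ρ := (intF3 r).integral_prod_left
  have j5 : Integrable (fun x => ∫ y, F5 r (x, y) ∂ρ) ρ := (intF5 r).integral_prod_left
  have s2 : Integrable (fun x => (min (x + r) (1/2) - max x (-(1/2)))^2/2
      + (min (x + r) (1/2) - max x (-(1/2)))^2/2) ρ := by exact j1.add j1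
  have s3 : Integrable (fun x => (min (x + r) (1/2) - max x (-(1/2)))^2/2
      + (min (x + r) (1/2) - max x (-(1/2)))^2/2
      + (∫ y, F3 r (x, y) ∂ρ)) ρ := by exact s2.add j3
  have s4 : Integrable (fun x => (min (x + r) (1/2) - max x (-(1/2)))^2/2
      + (min (x + r) (1/2) - max x (-(1/2)))^2/2
      + (∫ y, F3 r (x, y) ∂ρ)
      + (min x (1/2) - max (x - r) (-(1/2)))^2/2) ρ := by exact s3.add j2
  have s5 : Integrable (fun x => (min (x + r) (1/2) - max x (-(1/2)))^2/2
      + (min (x + r) (1/2) - max x (-(1/2)))^2/2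
      + (∫ y, F3 r (x, y) ∂ρ)
      + (min x (1/2) - max (x - r) (-(1/2)))^2/2
      + (∫ y, F5 r (x, y) ∂ρ)) ρ := by exact s4.add j5
  rw [integral_add s5 j2, integral_add s4 j5, integral_add s3 j2, integral_add s2 j3,
    integral_add j1 j1]
  have e3 : (∫ x, (∫ y, F3 r (x, y) ∂ρ) ∂ρ) = r^2*(1-r)/2 + r^3/6 := by
    rw [integral_integral_swap (f := fun x y => F3 r (x, y)) (by exact intF3 r)]
    have key : Set.EqOn (fun y => ∫ x, F3 r (x, y) ∂ρ)
        (fun y => (min (y + r) (1/2) - max y (-(1/2)))^2/2) C := by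
      intro y hy
      simp only [C, Set.mem_Icc] at hy
      have hyp : max y (-(1/2)) ≤ min (y + r) (1/2) :=
        max_le (le_min (by linarith [hy.1, hy.2]) (by linarith [hy.2]))
          (le_min (by linarith [hy.1]) (by norm_num))
      have h := midL1 y (y + r) hyp
      simpa only [F3] using h
    rw [setIntegral_congr_fun measC key, outerO1 hr hr1]
  have e5 : (∫ x, (∫ y, F5 r (x, y) ∂ρ) ∂ρ) = r^2*(1-r)/2 + r^3/6 := by
    rw [integral_integral_swap (f := fun x y => F5 r (x, y)) (by exact intF5 r)]
    have key : Set.EqOn (fun y => ∫ x, F5 r (x, y) ∂ρ)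
        (fun y => (min y (1/2) - max (y - r) (-(1/2)))^2/2) C := by
      intro y hy
      simp only [C, Set.mem_Icc] at hy
      have hyp : max (y - r) (-(1/2)) ≤ min y (1/2) :=
        max_le (le_min (by linarith [hy.1, hy.2]) (by linarith [hy.2]))
          (le_min (by linarith [hy.1]) (by norm_num))
      have h := midL2 (y - r) y hyp
      simpa only [F5] using h
    rw [setIntegral_congr_fun measC key, outerO2 hr hr1]
  rw [e3, e5, outerO1 hr hr1, outerO2 hr hr1]
  ring

def eqv : (ℝ × (ℝ × ℝ)) ≃ᵐ (Fin 3 → ℝ) :=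
  ((MeasurableEquiv.refl ℝ).prodCongr (MeasurableEquiv.finTwoArrow (α := ℝ)).symm).trans
    (MeasurableEquiv.piFinSuccAbove (fun _ : Fin 3 => ℝ) 0).symm

lemma eqv_mp : MeasurePreserving eqv volume volume := by
  have h1 : MeasurePreserving
      ((MeasurableEquiv.piFinSuccAbove (fun _ : Fin 3 => ℝ) 0).symm) volume volume :=
    (volume_preserving_piFinSuccAbove (fun _ : Fin 3 => ℝ) 0).symm _
  have h2 : MeasurePreserving
      (((MeasurableEquiv.refl ℝ).prodCongr (MeasurableEquiv.finTwoArrow (α := ℝ)).symm))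
      volume volume := by
    exact (MeasurePreserving.id volume).prod ((volume_preserving_finTwoArrow ℝ).symm _)
  exact h1.comp h2

lemma eqv_apply (p : ℝ × (ℝ × ℝ)) : eqv p = ![p.1, p.2.1, p.2.2] := by
  funext i
  fin_cases i <;> rfl

lemma chi_meas (r : ℝ) : Measurable (fun p : ℝ × (ℝ × ℝ) =>
    (if |p.1 - p.2.1| ≤ r then (1:ℝ) else 0) * (if |p.2.1 - p.2.2| ≤ r then (1:ℝ) else 0)
      * (if |p.2.2 - p.1| ≤ r then (1:ℝ) else 0)) := by
  apply Measurable.mul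
  apply Measurable.mul
  · exact Measurable.ite (measurableSet_le (by fun_prop) measurable_const)
      measurable_const measurable_const
  · exact Measurable.ite (measurableSet_le (by fun_prop) measurable_const)
      measurable_const measurable_const
  · exact Measurable.ite (measurableSet_le (by fun_prop) measurable_const)
      measurable_const measurable_const

lemma chi_bound (r : ℝ) (p : ℝ × (ℝ × ℝ)) :
    |(if |p.1 - p.2.1| ≤ r then (1:ℝ) else 0) * (if |p.2.1 - p.2.2| ≤ r then (1:ℝ) else 0)
      * (if |p.2.2 - p.1| ≤ r then (1:ℝ) else 0)| ≤ 1 := by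
  split_ifs <;> norm_num

/-- reduce the integral over the cube in `Fin 3 → ℝ` to a triple iterated integral -/
lemma pi_step (r : ℝ) :
    (∫ ξ in (Set.univ.pi fun _ : Fin 3 => Set.Icc (-(1:ℝ)/2) (1/2)),
        (if |ξ 0 - ξ 1| ≤ r then (1:ℝ) else 0) * (if |ξ 1 - ξ 2| ≤ r then (1:ℝ) else 0)
          * (if |ξ 2 - ξ 0| ≤ r then (1:ℝ) else 0))
      = ∫ x in C, ∫ y in C, ∫ z in C,
          (if |x - y| ≤ r then (1:ℝ) else 0) * (if |y - z| ≤ r then 1 else 0)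
            * (if |z - x| ≤ r then 1 else 0) := by
  have hpre : eqv ⁻¹' (Set.univ.pi fun _ : Fin 3 => Set.Icc (-(1:ℝ)/2) (1/2))
      = C ×ˢ (C ×ˢ C) := by
    ext p
    simp only [Set.mem_preimage, Set.mem_univ_pi, eqv_apply, Set.mem_prod]
    constructor
    · intro h
      exact ⟨h 0, h 1, h 2⟩
    · rintro ⟨h1, h2, h3⟩ i
      fin_cases i <;> assumption
  rw [← eqv_mp.setIntegral_preimage_emb eqv.measurableEmbedding, hpre]
  have hval : (fun p : ℝ × (ℝ × ℝ) =>
      (if |eqv p 0 - eqv p 1| ≤ r then (1:ℝ) else 0)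
        * (if |eqv p 1 - eqv p 2| ≤ r then (1:ℝ) else 0)
        * (if |eqv p 2 - eqv p 0| ≤ r then (1:ℝ) else 0))
      = fun p : ℝ × (ℝ × ℝ) =>
      (if |p.1 - p.2.1| ≤ r then (1:ℝ) else 0) * (if |p.2.1 - p.2.2| ≤ r then (1:ℝ) else 0)
        * (if |p.2.2 - p.1| ≤ r then (1:ℝ) else 0) := by
    funext p
    rw [eqv_apply]
    simp only [Matrix.cons_val_zero, Matrix.cons_val_one, Matrix.cons_val_two, Matrix.tail_cons, Matrix.head_cons]
    congr
  rw [hval]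
  rw [Measure.volume_eq_prod, ← Measure.prod_restrict]
  have hint : Integrable (fun p : ℝ × (ℝ × ℝ) =>
      (if |p.1 - p.2.1| ≤ r then (1:ℝ) else 0) * (if |p.2.1 - p.2.2| ≤ r then (1:ℝ) else 0)
        * (if |p.2.2 - p.1| ≤ r then (1:ℝ) else 0))
      (ρ.prod ((volume : Measure (ℝ × ℝ)).restrict (C ×ˢ C))) := by
    haveI : IsFiniteMeasure ((volume : Measure (ℝ × ℝ)).restrict (C ×ˢ C)) := by
      constructor
      rw [Measure.restrict_apply_univ, Measure.volume_eq_prod, Measure.prod_prod, volC, one_mul]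
      exact ENNReal.one_lt_top
    exact integrable_of_le_one (chi_meas r) (chi_bound r)
  rw [MeasureTheory.integral_prod _ hint]
  apply setIntegral_congr_fun measC
  intro x _
  rw [Measure.volume_eq_prod, ← Measure.prod_restrict]
  have hint2 : Integrable (fun q : ℝ × ℝ =>
      (if |x - q.1| ≤ r then (1:ℝ) else 0) * (if |q.1 - q.2| ≤ r then (1:ℝ) else 0)
        * (if |q.2 - x| ≤ r then (1:ℝ) else 0)) (ρ.prod ρ) := by
    apply integrable_of_le_one
    · apply Measurable.mul
      apply Measurable.mul
      · exact Measurable.ite (measurableSet_le (by fun_prop) measurable_const)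
          measurable_const measurable_const
      · exact Measurable.ite (measurableSet_le (by fun_prop) measurable_const)
          measurable_const measurable_const
      · exact Measurable.ite (measurableSet_le (by fun_prop) measurable_const)
          measurable_const measurable_const
    · intro q; split_ifs <;> norm_num
  show (∫ q : ℝ × ℝ, (if |x - q.1| ≤ r then (1:ℝ) else 0) * (if |q.1 - q.2| ≤ r then 1 else 0)
      * (if |q.2 - x| ≤ r then 1 else 0) ∂(ρ.prod ρ)) = _
  rw [MeasureTheory.integral_prod _ hint2]

lemma part_ge (r : ℝ) (hr1 : 1 ≤ r) :
    (∫ ξ in (Set.univ.pi fun _ : Fin 3 => Set.Icc (-(1:ℝ)/2) (1/2)),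
        (if |ξ 0 - ξ 1| ≤ r then (1:ℝ) else 0) * (if |ξ 1 - ξ 2| ≤ r then (1:ℝ) else 0)
          * (if |ξ 2 - ξ 0| ≤ r then (1:ℝ) else 0)) = 1 := by
  have hmeas : MeasurableSet (Set.univ.pi fun _ : Fin 3 => Set.Icc (-(1:ℝ)/2) (1/2)) :=
    MeasurableSet.univ_pi (fun _ => measurableSet_Icc)
  have heq : Set.EqOn (fun ξ : Fin 3 → ℝ =>
      (if |ξ 0 - ξ 1| ≤ r then (1:ℝ) else 0) * (if |ξ 1 - ξ 2| ≤ r then (1:ℝ) else 0)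
        * (if |ξ 2 - ξ 0| ≤ r then (1:ℝ) else 0)) (fun _ => (1:ℝ))
      (Set.univ.pi fun _ : Fin 3 => Set.Icc (-(1:ℝ)/2) (1/2)) := by
    intro ξ hξ
    rw [Set.mem_univ_pi] at hξ
    have h0 := hξ 0
    have h1 := hξ 1
    have h2 := hξ 2
    simp only [Set.mem_Icc] at h0 h1 h2
    have e0 : |ξ 0 - ξ 1| ≤ r := abs_le.mpr ⟨by linarith [h0.1, h1.2], by linarith [h0.2, h1.1]⟩
    have e1 : |ξ 1 - ξ 2| ≤ r := abs_le.mpr ⟨by linarith [h1.1, h2.2], by linarith [h1.2, h2.1]⟩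
    have e2 : |ξ 2 - ξ 0| ≤ r := abs_le.mpr ⟨by linarith [h2.1, h0.2], by linarith [h2.2, h0.1]⟩
    simp only [if_pos e0, if_pos e1, if_pos e2]
    norm_num
  rw [setIntegral_congr_fun hmeas heq, setIntegral_const, smul_eq_mul, mul_one]
  have hv : volume (Set.univ.pi fun _ : Fin 3 => Set.Icc (-(1:ℝ)/2) (1/2)) = 1 := by
    rw [volume_pi_pi]
    have : volume (Set.Icc (-(1:ℝ)/2) (1/2)) = 1 := volC
    rw [this]
    simp
  rw [measureReal_def, hv, ENNReal.toReal_one]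

end
end S11


/-- `f₃(r) = ∫_{[-1/2,1/2]^3} 𝟙_{|ξ₁-ξ₂|≤r}𝟙_{|ξ₂-ξ₃|≤r}𝟙_{|ξ₃-ξ₁|≤r} dξ`
equals `3r² - 2r³` for `0 < r < 1` and equals `1` for `r ≥ 1`. -/
theorem stmt11 (r : ℝ) (hr : 0 < r) :
    (r < 1 →
      (∫ ξ in (Set.univ.pi fun _ : Fin 3 => Set.Icc (-(1:ℝ)/2) (1/2)),
        (if |ξ 0 - ξ 1| ≤ r then (1:ℝ) else 0) * (if |ξ 1 - ξ 2| ≤ r then (1:ℝ) else 0)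
          * (if |ξ 2 - ξ 0| ≤ r then (1:ℝ) else 0))
        = 3 * r ^ 2 - 2 * r ^ 3) ∧
    (1 ≤ r →
      (∫ ξ in (Set.univ.pi fun _ : Fin 3 => Set.Icc (-(1:ℝ)/2) (1/2)),
        (if |ξ 0 - ξ 1| ≤ r then (1:ℝ) else 0) * (if |ξ 1 - ξ 2| ≤ r then (1:ℝ) else 0)
          * (if |ξ 2 - ξ 0| ≤ r then (1:ℝ) else 0))
        = 1) := by
  constructor
  · intro hlt
    rw [S11.pi_step r]
    exact S11.triple r hr hlt
  · intro hge
    exact S11.part_ge r hge
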